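/- Let (q,B_q) be a complex quadratic vector space and let C and C' be invertible B_q-symmetric endomorphisms of q satisfying 3C² = 2C³ + C and 3C'² = 2C'³ + C'. Let J (resp. J') be q ⊕ ℂx₁ ⊕ ℂy₁ with the diagonalizable double extension product determined by C (resp. C'), namely y₁⋆y₁ = y₁, y₁⋆x₁ = x₁, y₁⋆x = C(x), x⋆y = B_q(C(x),y)·x₁, x₁⋆x = x₁⋆x₁ = 0 for x,y ∈ q (and analogously for C'). Then there exists an algebra isomorphism (a bijective ℂ-linear map A with A(a⋆b) = A(a)⋆'A(b)) between J and J' if and only if there exists an isometry P of (q,B_q) such that C' = P C P⁻¹. Moreover, in this case J and J' are i-isomorphic, i.e. isomorphic via a map that also preserves the forms B = B_q + B_t and B' = B_q + B_t, where B_t(x₁,x₁) = B_t(y₁,y₁) = 0 and B_t(x₁,y₁) = 1. -/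

import Mathlib

/-- Two diagonalizable double extensions of (q,B_q) by invertible symmetric
maps C, C' (with 3C² = 2C³ + C, 3C'² = 2C'³ + C') are isomorphic as algebras iff
C' = P C P⁻¹ for some isometry P of (q,B_q); and in that case they are i-isomorphic.
An element x + λx₁ + μy₁ is encoded as (x, λ, μ). -/
theorem stmt5
    {q : Type*} [AddCommGroup q] [Module ℂ q] [FiniteDimensional ℂ q]
    (Bq : q →ₗ[ℂ] q →ₗ[ℂ] ℂ)
    (hBsymm : ∀ x y : q, Bq x y = Bq y x)
    (hBnondeg : ∀ x : q, (∀ y : q, Bq x y = 0) → x = 0)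
    (C C' : q →ₗ[ℂ] q)
    (hCinv : Function.Bijective C) (hC'inv : Function.Bijective C')
    (hCsym : ∀ x y : q, Bq (C x) y = Bq x (C y))
    (hC'sym : ∀ x y : q, Bq (C' x) y = Bq x (C' y))
    (hC : (3 : ℂ) • (C ∘ₗ C) = (2 : ℂ) • (C ∘ₗ C ∘ₗ C) + C)
    (hC' : (3 : ℂ) • (C' ∘ₗ C') = (2 : ℂ) • (C' ∘ₗ C' ∘ₗ C') + C')
    (star star' : q × ℂ × ℂ → q × ℂ × ℂ → q × ℂ × ℂ)
    (hstar : ∀ (x y : q) (lam mu lam' mu' : ℂ),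
      star (x, lam, mu) (y, lam', mu') =
        (mu • C y + mu' • C x, Bq (C x) y + (lam * mu' + lam' * mu), mu * mu'))
    (hstar' : ∀ (x y : q) (lam mu lam' mu' : ℂ),
      star' (x, lam, mu) (y, lam', mu') =
        (mu • C' y + mu' • C' x, Bq (C' x) y + (lam * mu' + lam' * mu), mu * mu'))
    (Bext : q × ℂ × ℂ → q × ℂ × ℂ → ℂ)
    (hBext : ∀ a b : q × ℂ × ℂ,
      Bext a b = Bq a.1 b.1 + a.2.1 * b.2.2 + b.2.1 * a.2.2) :
    ((∃ A : (q × ℂ × ℂ) ≃ₗ[ℂ] q × ℂ × ℂ,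
        ∀ a b : q × ℂ × ℂ, A (star a b) = star' (A a) (A b)) ↔
      (∃ P : q ≃ₗ[ℂ] q, (∀ x y : q, Bq (P x) (P y) = Bq x y) ∧
        ∀ x : q, C' x = P (C (P.symm x)))) ∧
    ((∃ A : (q × ℂ × ℂ) ≃ₗ[ℂ] q × ℂ × ℂ,
        ∀ a b : q × ℂ × ℂ, A (star a b) = star' (A a) (A b)) →
      ∃ A : (q × ℂ × ℂ) ≃ₗ[ℂ] q × ℂ × ℂ,
        (∀ a b : q × ℂ × ℂ, A (star a b) = star' (A a) (A b)) ∧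
        ∀ a b : q × ℂ × ℂ, Bext (A a) (A b) = Bext a b) := by
  -- component form of the products
  have hs : ∀ p r : q × ℂ × ℂ, star p r =
      (p.2.2 • C r.1 + r.2.2 • C p.1,
        Bq (C p.1) r.1 + (p.2.1 * r.2.2 + r.2.1 * p.2.2), p.2.2 * r.2.2) :=
    fun p r => hstar p.1 r.1 p.2.1 p.2.2 r.2.1 r.2.2
  have hs' : ∀ p r : q × ℂ × ℂ, star' p r =
      (p.2.2 • C' r.1 + r.2.2 • C' p.1,
        Bq (C' p.1) r.1 + (p.2.1 * r.2.2 + r.2.1 * p.2.2), p.2.2 * r.2.2) :=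
    fun p r => hstar' p.1 r.1 p.2.1 p.2.2 r.2.1 r.2.2
  -- REVERSE direction: from an isometry P conjugating C to C', build the (i-)isomorphism
  have rev : ∀ P : q ≃ₗ[ℂ] q, (∀ x y : q, Bq (P x) (P y) = Bq x y) →
      (∀ x : q, C' x = P (C (P.symm x))) →
      ∃ A : (q × ℂ × ℂ) ≃ₗ[ℂ] q × ℂ × ℂ,
        (∀ a b : q × ℂ × ℂ, A (star a b) = star' (A a) (A b)) ∧
        ∀ a b : q × ℂ × ℂ, Bext (A a) (A b) = Bext a b := by
    intro P hP hconj
    have hconj' : ∀ x : q, C' (P x) = P (C x) := by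
      intro x
      rw [hconj (P x), P.symm_apply_apply]
    set A : (q × ℂ × ℂ) ≃ₗ[ℂ] q × ℂ × ℂ := P.prodCongr (LinearEquiv.refl ℂ (ℂ × ℂ)) with hA
    have hAapp : ∀ p : q × ℂ × ℂ, A p = (P p.1, p.2.1, p.2.2) := fun p => rfl
    refine ⟨A, ?_, ?_⟩
    · intro a b
      rw [hs, hs', hAapp, hAapp, hAapp]
      refine Prod.ext ?_ (Prod.ext ?_ rfl)
      · simp [map_add, map_smul, hconj']
      · simp [hconj', hP]
    · intro a b
      rw [hBext, hBext, hAapp, hAapp]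
      simp [hP]
  -- FORWARD direction: extract an isometry from an algebra isomorphism
  have fwd : (∃ A : (q × ℂ × ℂ) ≃ₗ[ℂ] q × ℂ × ℂ,
        ∀ a b : q × ℂ × ℂ, A (star a b) = star' (A a) (A b)) →
      ∃ P : q ≃ₗ[ℂ] q, (∀ x y : q, Bq (P x) (P y) = Bq x y) ∧
        ∀ x : q, C' x = P (C (P.symm x)) := by
    rintro ⟨A, hA⟩
    set u : q × ℂ × ℂ := A (0, 0, 1) with hu
    set z : q × ℂ × ℂ := A (0, 1, 0) with hz
    -- star (0,1,0) (0,1,0) = 0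
    have e1 : star ((0 : q), (1 : ℂ), (0 : ℂ)) (0, 1, 0) = 0 := by
      rw [hs]; simp
    -- star (0,0,1) (0,0,1) = (0,0,1)
    have e2 : star ((0 : q), (0 : ℂ), (1 : ℂ)) (0, 0, 1) = (0, 0, 1) := by
      rw [hs]; simp
    -- star (0,0,1) (0,1,0) = (0,1,0)
    have e3 : star ((0 : q), (0 : ℂ), (1 : ℂ)) (0, 1, 0) = (0, 1, 0) := by
      rw [hs]; simp
    -- d = z.2.2 = 0
    have hzz : star' z z = 0 := by
      have h := hA (0, 1, 0) (0, 1, 0)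
      rw [e1] at h
      rw [← h, map_zero]
    have hd : z.2.2 = 0 := by
      have := congrArg (fun p : q × ℂ × ℂ => p.2.2) hzz
      rw [hs' z z] at this
      exact mul_self_eq_zero.mp this
    -- u = star' u u
    have huu : star' u u = u := by
      have h := hA (0, 0, 1) (0, 0, 1)
      rw [e2] at h
      exact h.symm
    have ht2 : u.2.2 * u.2.2 = u.2.2 := by
      have := congrArg (fun p : q × ℂ × ℂ => p.2.2) huu
      rw [hs' u u] at this
      exact this
    -- z = star' u z
    have huz : star' u z = z := by
      have h := hA (0, 0, 1) (0, 1, 0)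
      rw [e3] at h
      exact h.symm
    -- t = u.2.2 is 0 or 1; rule out 0
    have ht : u.2.2 = 1 := by
      have h01 : u.2.2 = 0 ∨ u.2.2 = 1 := by
        have hfac : u.2.2 * (u.2.2 - 1) = 0 := by linear_combination ht2
        rcases mul_eq_zero.mp hfac with h | h
        · exact Or.inl h
        · exact Or.inr (sub_eq_zero.mp h)
      rcases h01 with h0 | h1
      · exfalso
        -- t = 0 : then u.1 = 0 and z.1 = 0
        have hu1 : u.1 = 0 := by
          have := congrArg (fun p : q × ℂ × ℂ => p.1) huu
          rw [hs' u u] at this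
          simpa [h0] using this.symm
        have hz1 : z.1 = 0 := by
          have := congrArg (fun p : q × ℂ × ℂ => p.1) huz
          rw [hs' u z] at this
          simpa [h0, hd] using this.symm
        -- A (u.2.1 • (0,1,0) - z.2.1 • (0,0,1)) = u.2.1 • z - z.2.1 • u = 0
        have key : A (u.2.1 • ((0 : q), (1 : ℂ), (0 : ℂ)) - z.2.1 • (0, 0, 1)) = 0 := by
          rw [map_sub, map_smul, map_smul, ← hu, ← hz]
          refine sub_eq_zero_of_eq (Prod.ext ?_ (Prod.ext ?_ ?_))
          · show u.2.1 • z.1 = z.2.1 • u.1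
            rw [hu1, hz1, smul_zero, smul_zero]
          · show u.2.1 * z.2.1 = z.2.1 * u.2.1
            ring
          · show u.2.1 * z.2.2 = z.2.1 * u.2.2
            rw [hd, h0, mul_zero, mul_zero]
        have key2 : u.2.1 • ((0 : q), (1 : ℂ), (0 : ℂ)) - z.2.1 • (0, 0, 1) = 0 := by
          apply A.injective
          rw [key, map_zero]
        have h21 : u.2.1 = 0 := by
          have := congrArg (fun p : q × ℂ × ℂ => p.2.1) key2
          simpa using this
        -- then u = 0, contradicting injectivity of A
        have hu0 : u = 0 := by
          refine Prod.ext ?_ (Prod.ext ?_ ?_) <;> simp [hu1, h21, h0]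
        have : ((0 : q), (0 : ℂ), (1 : ℂ)) = (0 : q × ℂ × ℂ) := by
          apply A.injective
          rw [← hu, hu0, map_zero]
        have := congrArg (fun p : q × ℂ × ℂ => p.2.2) this
        simpa using this
      · exact h1
    -- the map F x = (A (x,0,0)).1
    set F : q →ₗ[ℂ] q :=
      (LinearMap.fst ℂ q (ℂ × ℂ)) ∘ₗ (A.toLinearMap ∘ₗ LinearMap.inl ℂ q (ℂ × ℂ)) with hFdef
    have hF : ∀ x : q, F x = (A (x, 0, 0)).1 := fun x => rfl
    have hAx : ∀ x : q, A (x, 0, 0) = ((A (x, 0, 0)).1, (A (x, 0, 0)).2.1, (A (x, 0, 0)).2.2) :=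
      fun x => rfl
    -- product of two q-elements
    have e5 : ∀ x y : q, star ((x : q), (0 : ℂ), (0 : ℂ)) (y, 0, 0) =
        Bq (C x) y • ((0 : q), (1 : ℂ), (0 : ℂ)) := by
      intro x y
      rw [hs]
      refine Prod.ext ?_ (Prod.ext ?_ ?_) <;> simp
    have e5' : ∀ x y : q, Bq (C x) y • z = star' (A (x, 0, 0)) (A (y, 0, 0)) := by
      intro x y
      have h := hA (x, 0, 0) (y, 0, 0)
      rw [e5 x y, map_smul, ← hz] at h
      exact h
    -- g x := (A (x,0,0)).2.2 = 0
    have hg : ∀ x : q, (A (x, 0, 0)).2.2 = 0 := by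
      intro x
      have := congrArg (fun p : q × ℂ × ℂ => p.2.2) (e5' x x)
      rw [hs'] at this
      simp only [Prod.smul_fst, Prod.smul_snd, smul_eq_mul] at this
      rw [hd, mul_zero] at this
      exact mul_self_eq_zero.mp this.symm
    -- w = z.1 = 0
    have hw : z.1 = 0 := by
      rcases eq_or_ne z.1 0 with h | h
      · exact h
      · exfalso
        have hB0 : ∀ x y : q, Bq (C x) y = 0 := by
          intro x y
          have := congrArg (fun p : q × ℂ × ℂ => p.1) (e5' x y)
          rw [hs'] at this
          simp only [Prod.smul_fst, hg, zero_smul, smul_eq_mul, zero_add, add_zero] at this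
          rcases smul_eq_zero.mp this with h' | h'
          · exact h'
          · exact absurd h' h
        have hC0 : ∀ x : q, C x = 0 := fun x => hBnondeg _ (hB0 x)
        obtain ⟨x0, hx0⟩ := hCinv.2 z.1
        exact h (by rw [← hx0, hC0])
    -- c = z.2.1 ≠ 0
    have hc : z.2.1 ≠ 0 := by
      intro h0
      have hz0 : z = 0 := by
        refine Prod.ext ?_ (Prod.ext ?_ ?_) <;> simp [hw, h0, hd]
      have : ((0 : q), (1 : ℂ), (0 : ℂ)) = (0 : q × ℂ × ℂ) := by
        apply A.injective
        rw [← hz, hz0, map_zero]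
      have := congrArg (fun p : q × ℂ × ℂ => p.2.1) this
      simpa using this
    -- pairing identity : Bq (C' (F x)) (F y) = Bq (C x) y * z.2.1
    have hpair : ∀ x y : q, Bq (C' (F x)) (F y) = Bq (C x) y * z.2.1 := by
      intro x y
      have := congrArg (fun p : q × ℂ × ℂ => p.2.1) (e5' x y)
      rw [hs'] at this
      simp only [Prod.smul_snd, Prod.smul_fst, smul_eq_mul, hg, mul_zero, add_zero,
        zero_mul] at this
      rw [hF, hF]
      exact this.symm
    -- intertwining : F (C x) = C' (F x)
    have e4 : ∀ x : q, star ((0 : q), (0 : ℂ), (1 : ℂ)) (x, 0, 0) = ((C x : q), (0 : ℂ), (0 : ℂ)) := by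
      intro x
      rw [hs]
      refine Prod.ext ?_ (Prod.ext ?_ ?_) <;> simp
    have hFC : ∀ x : q, F (C x) = C' (F x) := by
      intro x
      have h := hA (0, 0, 1) (x, 0, 0)
      rw [e4 x, hs'] at h
      have h1 := congrArg (fun p : q × ℂ × ℂ => p.1) h
      simp only [← hu] at h1
      rw [hF, hF, h1, ht, hg, one_smul, zero_smul, add_zero]
    -- F is bijective
    have hFinj : Function.Injective F := by
      intro x1 x2 h12
      have hsub : F (x1 - x2) = 0 := by rw [map_sub, h12, sub_self]
      have hx : x1 - x2 = 0 := by
        have hB : ∀ y : q, Bq (C (x1 - x2)) y = 0 := by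
          intro y
          have := hpair (x1 - x2) y
          rw [hsub, map_zero, map_zero, LinearMap.zero_apply] at this
          exact (mul_eq_zero.mp this.symm).resolve_right hc
        have := hBnondeg _ hB
        have h0 : C (x1 - x2) = C 0 := by rw [this, map_zero]
        exact hCinv.1 h0
      exact sub_eq_zero.mp hx
    -- full conformality : Bq (F x) (F y) = Bq x y * z.2.1
    have hconf : ∀ x y : q, Bq (F x) (F y) = Bq x y * z.2.1 := by
      intro x y
      obtain ⟨x', hx'⟩ := hCinv.2 x
      rw [← hx', hFC, hpair]
    -- square root of c
    obtain ⟨e, he⟩ : ∃ e : ℂ, e ^ 2 = z.2.1 := IsAlgClosed.exists_pow_nat_eq z.2.1 two_pos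
    have he2 : e * e = z.2.1 := by rw [← he]; ring
    have hene : e ≠ 0 := by
      intro h0
      rw [h0, zero_mul] at he2
      exact hc he2.symm
    -- P := e⁻¹ • F
    set G : q →ₗ[ℂ] q := e⁻¹ • F with hGdef
    have hGapp : ∀ x : q, G x = e⁻¹ • F x := fun x => rfl
    have hGinj : Function.Injective G := by
      intro x1 x2 h12
      apply hFinj
      have := congrArg (fun v : q => e • v) h12
      simpa [hGapp, smul_smul, mul_inv_cancel₀ hene] using this
    have hGbij : Function.Bijective G := ⟨hGinj, LinearMap.injective_iff_surjective.mp hGinj⟩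
    set P : q ≃ₗ[ℂ] q := LinearEquiv.ofBijective G hGbij with hPdef
    have hPapp : ∀ x : q, P x = e⁻¹ • F x := fun x => rfl
    refine ⟨P, ?_, ?_⟩
    · intro x y
      simp only [hPapp, map_smul, LinearMap.smul_apply, smul_eq_mul, hconf]
      rw [← he2]
      field_simp
    · intro x
      have hPC : ∀ v : q, C' (P v) = P (C v) := by
        intro v
        rw [hPapp, map_smul, hPapp, ← hFC]
      have := hPC (P.symm x)
      rw [P.apply_symm_apply] at this
      exact this
  refine ⟨⟨fwd, ?_⟩, ?_⟩
  · rintro ⟨P, hP, hconj⟩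
    obtain ⟨A, hA, _⟩ := rev P hP hconj
    exact ⟨A, hA⟩
  · intro h
    obtain ⟨P, hP, hconj⟩ := fwd h
    exact rev P hP hconj
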